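/- For any word ω ∈ {1,2,3,4}*, E(ω1) = E(ω2) = (1/72) E(ω) and E(ω3) = E(ω4) = (1/24) E(ω); consequently E(ω1,ω3) = E(ω2,ω4) > E(ω1,ω2) > E(ω3) = E(ω4) > E(ω1) = E(ω2) whenever E(ω) > 0. -/

import Mathlib

open MeasureTheory ProbabilityTheory
open scoped ENNReal

noncomputable section

abbrev E2 : Type := EuclideanSpace ℝ (Fin 2)

/-- The point (a,b) of the Euclidean plane. -/
def pt (a b : ℝ) : E2 := (WithLp.equiv 2 (Fin 2 → ℝ)).symm ![a, b]

/-- The four generating similarities S₁,…,S₄ (indexed 0,…,3) of the Sierpiński carpet. -/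
def S : Fin 4 → E2 → E2
  | 0 => fun x => pt (x 0 / 3) (x 1 / 3)
  | 1 => fun x => pt (x 0 / 3 + 2/3) (x 1 / 3)
  | 2 => fun x => pt (x 0 / 3) (x 1 / 3 + 2/3)
  | 3 => fun x => pt (x 0 / 3 + 2/3) (x 1 / 3 + 2/3)

/-- The self-affinity equation P = (1/8)P∘S₁⁻¹ + (1/8)P∘S₂⁻¹ + (3/8)P∘S₃⁻¹ + (3/8)P∘S₄⁻¹. -/
def carpetEq (P : Measure E2) : Prop :=
  P = (1/8 : ℝ≥0∞) • P.map (S 0) + (1/8 : ℝ≥0∞) • P.map (S 1)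
    + (3/8 : ℝ≥0∞) • P.map (S 2) + (3/8 : ℝ≥0∞) • P.map (S 3)

/-- The unit square [0,1]². -/
def unitSq : Set E2 := {x | ∀ i, x i ∈ Set.Icc (0:ℝ) 1}

/-- S_ω = S_{ω₁} ∘ ⋯ ∘ S_{ω_k} for a word ω. -/
def Sw (w : List (Fin 4)) : E2 → E2 := fun x => w.foldr S x

/-- The basic square J_ω = S_ω([0,1]²). -/
def Jw (w : List (Fin 4)) : Set E2 := Sw w '' unitSq

/-- The basic square J_i of the first level. -/
def Jset (i : Fin 4) : Set E2 := S i '' unitSq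

/-- The mass centroid (conditional expectation) of P on a set A. -/
def ctr (P : Measure E2) (A : Set E2) : E2 := (P A).toReal⁻¹ • ∫ x in A, x ∂P

/-- E(ω) : distortion error on J_ω about its centroid a(ω) = S_ω(1/2,3/4). -/
def Err (P : Measure E2) (w : List (Fin 4)) : ℝ :=
  ∫ x in Jw w, ‖x - Sw w (pt (1/2) (3/4))‖^2 ∂P

/-- E(ωi, ωj) : distortion error on J_{ωi} ∪ J_{ωj} about its centroid. -/
def Epair (P : Measure E2) (w : List (Fin 4)) (i j : Fin 4) : ℝ :=
  ∫ x in (Jw (w ++ [i]) ∪ Jw (w ++ [j])),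
    ‖x - ctr P (Jw (w ++ [i]) ∪ Jw (w ++ [j]))‖^2 ∂P

open Metric
open scoped RealInnerProductSpace
set_option linter.unusedSectionVars false

def tv : Fin 4 → E2 := ![pt 0 0, pt (2/3) 0, pt 0 (2/3), pt (2/3) (2/3)]
lemma S_apply (i : Fin 4) (x : E2) : S i x = (3:ℝ)⁻¹ • x + tv i := by
  fin_cases i <;> (ext k; fin_cases k <;> simp [S, tv, pt] <;> ring)
lemma S_cont (i : Fin 4) : Continuous (S i) := by
  simp only [funext (S_apply i)]
  exact (continuous_const_smul _).add continuous_const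
lemma S_meas (i : Fin 4) : Measurable (S i) := (S_cont i).measurable
lemma unitSq_closed : IsClosed unitSq := by
  have : unitSq = ⋂ i, (fun x : E2 => x i) ⁻¹' Set.Icc (0:ℝ) 1 := by ext x; simp [unitSq]
  rw [this]; exact isClosed_iInter fun i => isClosed_Icc.preimage ((continuous_apply i).comp (PiLp.continuous_ofLp 2 _))
lemma unitSq_nonempty : Set.Nonempty unitSq := ⟨0, fun i => by simp⟩
lemma unitSq_bounded : Bornology.IsBounded unitSq := by
  have h : unitSq ⊆ Metric.closedBall 0 2 := by
    intro x hx
    simp only [Metric.mem_closedBall, dist_zero_right]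
    have h0 := hx 0; have h1 := hx 1
    have hn : ‖x‖^2 ≤ 4 := by
      have he : ‖x‖^2 = (x 0)^2 + (x 1)^2 := by
        rw [EuclideanSpace.norm_eq, Real.sq_sqrt (by positivity), Fin.sum_univ_two, Real.norm_eq_abs, Real.norm_eq_abs, sq_abs, sq_abs]
      rw [he]; nlinarith [h0.1, h0.2, h1.1, h1.2]
    nlinarith [norm_nonneg x]
  exact (Metric.isBounded_closedBall).subset h
lemma unitSq_compact : IsCompact unitSq :=
  Metric.isCompact_of_isClosed_isBounded unitSq_closed unitSq_bounded

lemma tv_mem (i : Fin 4) (k : Fin 2) : tv i k = 0 ∨ tv i k = 2/3 := by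
  fin_cases i <;> fin_cases k <;> simp [tv, pt]

lemma S_mapsTo (i : Fin 4) : Set.MapsTo (S i) unitSq unitSq := by
  intro x hx k
  rw [S_apply]
  have hk := hx k
  have h := tv_mem i k
  simp only [PiLp.add_apply, PiLp.smul_apply, smul_eq_mul]
  rcases h with h | h <;> rw [h] <;> constructor <;> [skip; skip; skip; skip] <;>
    simp only [Set.mem_Icc] at hk <;> nlinarith [hk.1, hk.2]

lemma dist_S (i : Fin 4) (x y : E2) : dist (S i x) (S i y) = dist x y / 3 := by
  rw [dist_eq_norm, dist_eq_norm, S_apply, S_apply]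
  have : (3:ℝ)⁻¹ • x + tv i - ((3:ℝ)⁻¹ • y + tv i) = (3:ℝ)⁻¹ • (x - y) := by module
  rw [this, norm_smul]; simp; ring

lemma infDist_S (i : Fin 4) (x : E2) :
    infDist (S i x) unitSq ≤ infDist x unitSq / 3 := by
  by_contra h
  push_neg at h
  have h' : infDist x unitSq < 3 * infDist (S i x) unitSq := by linarith
  obtain ⟨y, hy, hd⟩ := (infDist_lt_iff unitSq_nonempty).1 h'
  have h1 : infDist (S i x) unitSq ≤ dist (S i x) (S i y) :=
    infDist_le_dist_of_mem (S_mapsTo i hy)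
  rw [dist_S] at h1
  linarith

variable (P : Measure E2) [IsProbabilityMeasure P]

lemma far_meas (s : ℝ) : MeasurableSet {x : E2 | s ≤ infDist x unitSq} :=
  (isClosed_le continuous_const (continuous_infDist_pt _)).measurableSet

lemma far_step (hP : carpetEq P) (s : ℝ) :
    P {x | s ≤ infDist x unitSq} ≤ P {x | 3*s ≤ infDist x unitSq} := by
  set A := {x : E2 | s ≤ infDist x unitSq} with hA
  have key : ∀ i : Fin 4, P.map (S i) A ≤ P {x | 3*s ≤ infDist x unitSq} := by
    intro i
    rw [Measure.map_apply (S_meas i) (far_meas s)]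
    refine measure_mono ?_
    intro x hx
    have h1 : s ≤ infDist (S i x) unitSq := hx
    have h2 := infDist_S i x
    simp only [Set.mem_setOf_eq]
    linarith
  nth_rewrite 1 [hP]
  simp only [Measure.add_apply, Measure.smul_apply, smul_eq_mul]
  set M := P {x | 3*s ≤ infDist x unitSq}
  calc (1/8) * P.map (S 0) A + (1/8) * P.map (S 1) A + (3/8) * P.map (S 2) A
        + (3/8) * P.map (S 3) A
      ≤ (1/8) * M + (1/8) * M + (3/8) * M + (3/8) * M := by
        gcongr <;> exact key _
    _ = ((1/8 + 1/8 + 3/8 + 3/8) : ℝ≥0∞) * M := by ring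
    _ = M := by
        have h8 : (8:ℝ≥0∞) ≠ 0 := by norm_num
        have ht : (8:ℝ≥0∞) ≠ ⊤ := by norm_num
        rw [show (1/8 + 1/8 + 3/8 + 3/8 : ℝ≥0∞) = 1 from by
          rw [ENNReal.div_add_div_same, ENNReal.div_add_div_same, ENNReal.div_add_div_same]
          norm_num
          exact ENNReal.div_self h8 ht, one_mul]

lemma far_zero (hP : carpetEq P) (s : ℝ) (hs : 0 < s) :
    P {x | s ≤ infDist x unitSq} = 0 := by
  have hstep : ∀ n : ℕ, P {x | s ≤ infDist x unitSq} ≤ P {x | 3^n * s ≤ infDist x unitSq} := by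
    intro n
    induction n with
    | zero => simp
    | succ n ih =>
      refine le_trans ih (le_trans (far_step P hP (3^n * s)) (le_of_eq ?_))
      congr 1
      ext x
      have : 3 * (3^n * s) = 3^(n+1) * s := by ring
      rw [Set.mem_setOf_eq, Set.mem_setOf_eq, this]
  have hanti : Antitone (fun n : ℕ => {x : E2 | 3^n * s ≤ infDist x unitSq}) := by
    intro n m hnm x hx
    have h1 : (3:ℝ)^n ≤ 3^m := pow_le_pow_right₀ (by norm_num) hnm
    have h2 : (3:ℝ)^m * s ≤ infDist x unitSq := hx
    have : (3:ℝ)^n * s ≤ 3^m * s := by nlinarith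
    exact le_trans this h2
  have hempty : ⋂ n : ℕ, {x : E2 | 3^n * s ≤ infDist x unitSq} = ∅ := by
    ext x
    simp only [Set.mem_iInter, Set.mem_setOf_eq, Set.mem_empty_iff_false, iff_false, not_forall,
      not_le]
    obtain ⟨n, hn⟩ := pow_unbounded_of_one_lt (infDist x unitSq / s) (by norm_num : (1:ℝ) < 3)
    exact ⟨n, by rw [div_lt_iff₀ hs] at hn; linarith⟩
  have htend : Filter.Tendsto (fun n : ℕ => P {x : E2 | 3^n * s ≤ infDist x unitSq})
      Filter.atTop (nhds 0) := by
    have := MeasureTheory.tendsto_measure_iInter_atTop (μ := P)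
      (fun n => (far_meas _).nullMeasurableSet) hanti ⟨0, measure_ne_top P _⟩
    rw [hempty] at this
    simpa [Function.comp_def] using this
  exact le_antisymm (le_of_tendsto_of_tendsto' tendsto_const_nhds htend hstep) (zero_le)

lemma compl_null (hP : carpetEq P) : P unitSqᶜ = 0 := by
  have hsub : unitSqᶜ ⊆ ⋃ n : ℕ, {x : E2 | 1/(n+1) ≤ infDist x unitSq} := by
    intro x hx
    have hpos : 0 < infDist x unitSq := by
      rcases lt_or_eq_of_le (infDist_nonneg (x := x) (s := unitSq)) with h' | h'
      · exact h'
      · exact absurd ((unitSq_closed.mem_iff_infDist_zero unitSq_nonempty).2 h'.symm) hx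
    obtain ⟨n, hn⟩ := exists_nat_one_div_lt hpos
    exact Set.mem_iUnion.2 ⟨n, le_of_lt hn⟩
  exact measure_mono_null hsub (measure_iUnion_null fun n => far_zero P hP _ (by positivity))

lemma ae_mem_unitSq (hP : carpetEq P) : ∀ᵐ x ∂P, x ∈ unitSq := by
  rw [MeasureTheory.ae_iff]
  exact compl_null P hP

variable {F : Type*} [NormedAddCommGroup F] [NormedSpace ℝ F]

lemma integrable_cont (hP : carpetEq P) (f : E2 → F) (hf : Continuous f) :
    Integrable f P := by
  obtain ⟨C, hC⟩ := IsCompact.exists_bound_of_continuousOn unitSq_compact hf.continuousOn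
  refine ⟨hf.aestronglyMeasurable, ?_⟩
  apply MeasureTheory.HasFiniteIntegral.of_bounded (C := C)
  filter_upwards [ae_mem_unitSq P hP] with x hx using hC x hx

lemma integrable_map_S (hP : carpetEq P) (i : Fin 4) (f : E2 → F) (hf : Continuous f) :
    Integrable f (P.map (S i)) :=
  (integrable_map_measure hf.aestronglyMeasurable (S_meas i).aemeasurable).2
    (integrable_cont P hP (f ∘ S i) (hf.comp (S_cont i)))

def preal : Fin 4 → ℝ := ![1/8, 1/8, 3/8, 3/8]

lemma step_integral (hP : carpetEq P) (f : E2 → F) (hf : Continuous f)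
    (A : Set E2) (hA : MeasurableSet A) :
    ∫ x in A, f x ∂P
      = ∑ j : Fin 4, preal j • ∫ x in (S j)⁻¹' A, f (S j x) ∂P := by
  rw [Fin.sum_univ_four]
  simp only [preal, Matrix.cons_val_zero, Matrix.cons_val_one, Matrix.head_cons,
    Matrix.cons_val_two, Matrix.tail_cons, Matrix.cons_val_three]
  have hIm : ∀ i : Fin 4, ∀ c : ℝ≥0∞, c ≠ ⊤ →
      IntegrableOn f A (c • P.map (S i)) := fun i c hc =>
    (((integrable_map_S P hP i f hf).smul_measure hc)).restrict
  have hone : ∀ i : Fin 4, ∀ c : ℝ≥0∞,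
      ∫ x in A, f x ∂(c • P.map (S i)) = c.toReal • ∫ x in (S i)⁻¹' A, f (S i x) ∂P := by
    intro i c
    rw [Measure.restrict_smul, integral_smul_measure,
      setIntegral_map hA hf.aestronglyMeasurable (S_meas i).aemeasurable]
  have hfin : (1/8 : ℝ≥0∞) ≠ ⊤ := (ENNReal.div_lt_top (by norm_num) (by norm_num)).ne
  have hfin' : (3/8 : ℝ≥0∞) ≠ ⊤ := (ENNReal.div_lt_top (by norm_num) (by norm_num)).ne
  calc ∫ x in A, f x ∂P
      = ∫ x in A, f x ∂((1/8 : ℝ≥0∞) • P.map (S 0) + (1/8 : ℝ≥0∞) • P.map (S 1)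
        + (3/8 : ℝ≥0∞) • P.map (S 2) + (3/8 : ℝ≥0∞) • P.map (S 3)) := by rw [← hP]
    _ = _ := by
        rw [Measure.restrict_add, Measure.restrict_add, Measure.restrict_add,
          integral_add_measure, integral_add_measure, integral_add_measure]
        · rw [hone 0, hone 1, hone 2, hone 3]
          norm_num [ENNReal.toReal_div]
        · exact hIm 0 (1/8) hfin
        · exact hIm 1 (1/8) hfin
        · exact Integrable.add_measure (hIm 0 (1/8) hfin) (hIm 1 (1/8) hfin)
        · exact hIm 2 (3/8) hfin'
        · exact Integrable.add_measure
            (Integrable.add_measure (hIm 0 (1/8) hfin) (hIm 1 (1/8) hfin)) (hIm 2 (3/8) hfin')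
        · exact hIm 3 (3/8) hfin'


def Sinv (i : Fin 4) : E2 → E2 := fun x => (3:ℝ) • x - (3:ℝ) • tv i

lemma Sinv_left (i : Fin 4) : Function.LeftInverse (Sinv i) (S i) := by
  intro x; rw [S_apply, Sinv]; module

lemma Sinv_right (i : Fin 4) : Function.RightInverse (Sinv i) (S i) := by
  intro x; rw [S_apply, Sinv]; module

lemma S_inj (i : Fin 4) : Function.Injective (S i) := (Sinv_left i).injective

lemma image_S_eq_preimage (i : Fin 4) (B : Set E2) : S i '' B = (Sinv i) ⁻¹' B := by
  rw [Set.image_eq_preimage_of_inverse (Sinv_left i) (Sinv_right i)]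

lemma Sinv_cont (i : Fin 4) : Continuous (Sinv i) :=
  ((continuous_const_smul _).sub continuous_const)

lemma image_S_meas (i : Fin 4) {B : Set E2} (hB : MeasurableSet B) :
    MeasurableSet (S i '' B) := by
  rw [image_S_eq_preimage]; exact hB.preimage (Sinv_cont i).measurable

lemma mem_Jset_bounds {i : Fin 4} {y : E2} (hy : y ∈ Jset i) (k : Fin 2) :
    tv i k ≤ y k ∧ y k ≤ tv i k + 1/3 := by
  obtain ⟨x, hx, rfl⟩ := hy
  rw [S_apply]
  have hk := hx k
  simp only [Set.mem_Icc] at hk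
  simp only [PiLp.add_apply, PiLp.smul_apply, smul_eq_mul]
  constructor <;> nlinarith [hk.1, hk.2]

lemma Jset_disj {i j : Fin 4} (hij : i ≠ j) : Jset i ∩ Jset j = ∅ := by
  ext y
  simp only [Set.mem_inter_iff, Set.mem_empty_iff_false, iff_false, not_and]
  intro hyi hyj
  have hi0 := mem_Jset_bounds hyi 0
  have hi1 := mem_Jset_bounds hyi 1
  have hj0 := mem_Jset_bounds hyj 0
  have hj1 := mem_Jset_bounds hyj 1
  fin_cases i <;> fin_cases j <;>
    first
    | exact hij rfl
    | (simp [tv, pt] at hi0 hi1 hj0 hj1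
       linarith [hi0.1, hi0.2, hj0.1, hj0.2, hi1.1, hi1.2, hj1.1, hj1.2])

lemma preim_null (hP : carpetEq P) {i j : Fin 4} (hij : i ≠ j) {B : Set E2}
    (hBU : B ⊆ unitSq) : P ((S j)⁻¹' (S i '' B)) = 0 := by
  refine measure_mono_null ?_ (compl_null P hP)
  intro x hx
  simp only [Set.mem_compl_iff]
  intro hxU
  have h1 : S j x ∈ Jset i := (Set.image_mono hBU) hx
  have h2 : S j x ∈ Jset j := ⟨x, hxU, rfl⟩
  exact (Set.eq_empty_iff_forall_notMem).1 (Jset_disj hij) (S j x) ⟨h1, h2⟩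

lemma image_integral (hP : carpetEq P) (i : Fin 4) {B : Set E2} (hB : MeasurableSet B)
    (hBU : B ⊆ unitSq) (f : E2 → F) (hf : Continuous f) :
    ∫ x in S i '' B, f x ∂P = preal i • ∫ x in B, f (S i x) ∂P := by
  rw [step_integral P hP f hf _ (image_S_meas i hB)]
  have hi : (S i)⁻¹' (S i '' B) = B := (S_inj i).preimage_image B
  rw [Finset.sum_eq_single i]
  · rw [hi]
  · intro j _ hji
    rw [Measure.restrict_zero_set (preim_null P hP hji.symm hBU), integral_zero_measure,
      smul_zero]
  · intro hni
    exact absurd (Finset.mem_univ i) hni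

def rho (w : List (Fin 4)) : ℝ := (w.map preal).prod

lemma Sw_cons_fun (a : Fin 4) (w : List (Fin 4)) : Sw (a :: w) = S a ∘ Sw w := rfl

lemma Sw_append (w v : List (Fin 4)) (x : E2) : Sw (w ++ v) x = Sw w (Sw v x) := by
  simp [Sw, List.foldr_append]

lemma rho_nil : rho [] = 1 := by simp [rho]
lemma rho_cons (a : Fin 4) (w : List (Fin 4)) : rho (a :: w) = preal a * rho w := by
  simp [rho]
lemma rho_append (w : List (Fin 4)) (i : Fin 4) : rho (w ++ [i]) = rho w * preal i := by
  simp [rho]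

lemma preal_pos (i : Fin 4) : 0 < preal i := by fin_cases i <;> norm_num [preal]

lemma rho_pos (w : List (Fin 4)) : 0 < rho w := by
  induction w with
  | nil => norm_num [rho_nil]
  | cons a w ih => rw [rho_cons]; exact mul_pos (preal_pos a) ih

lemma Sw_cont (w : List (Fin 4)) : Continuous (Sw w) := by
  induction w with
  | nil => exact continuous_id
  | cons a w ih => rw [Sw_cons_fun]; exact (S_cont a).comp ih

lemma Sw_mapsTo (w : List (Fin 4)) : Set.MapsTo (Sw w) unitSq unitSq := by
  induction w with
  | nil => exact fun x hx => hx
  | cons a w ih => rw [Sw_cons_fun]; exact (S_mapsTo a).comp ih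

lemma Sw_image_meas (w : List (Fin 4)) {B : Set E2} (hB : MeasurableSet B) :
    MeasurableSet (Sw w '' B) := by
  induction w with
  | nil => rw [show Sw [] = id from rfl, Set.image_id]; exact hB
  | cons a w ih => rw [Sw_cons_fun, Set.image_comp]; exact image_S_meas a ih

lemma Sw_affine (w : List (Fin 4)) (x : E2) :
    Sw w x = (((3:ℝ) ^ w.length)⁻¹) • x + Sw w 0 := by
  induction w with
  | nil => simp [Sw]
  | cons a w ih =>
    have h0 : Sw (a :: w) x = S a (Sw w x) := rfl
    have h1 : Sw (a :: w) 0 = S a (Sw w 0) := rfl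
    rw [h0, h1, ih, S_apply, S_apply (x := Sw w 0)]
    rw [List.length_cons]
    have : ((3:ℝ) ^ (w.length + 1))⁻¹ = (3:ℝ)⁻¹ * ((3:ℝ) ^ w.length)⁻¹ := by
      rw [pow_succ]
      field_simp
    rw [this]
    module

lemma word_integral (hP : carpetEq P) (w : List (Fin 4)) {B : Set E2} (hB : MeasurableSet B)
    (hBU : B ⊆ unitSq) (f : E2 → F) (hf : Continuous f) :
    ∫ x in Sw w '' B, f x ∂P = rho w • ∫ x in B, f (Sw w x) ∂P := by
  induction w generalizing f with
  | nil => rw [show Sw [] = id from rfl, Set.image_id]; simp [Sw, rho_nil]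
  | cons a w ih =>
    rw [Sw_cons_fun, Set.image_comp]
    rw [image_integral P hP a (Sw_image_meas w hB)
      ((Set.image_mono hBU).trans (Sw_mapsTo w).image_subset) f hf]
    rw [ih (f := fun x => f (S a x)) ((hf.comp (S_cont a)))]
    rw [rho_cons, smul_smul]
    rfl

def cpt : E2 := pt (1/2) (3/4)

lemma integral_affine (hP : carpetEq P) (r : ℝ) (v : E2) :
    ∫ x, (r • x + v) ∂P = r • (∫ x, x ∂P) + v := by
  have hid : Integrable (fun x : E2 => x) P := integrable_cont P hP _ continuous_id
  have hsm : Integrable (fun x : E2 => r • x) P := by exact hid.smul r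
  rw [integral_add hsm (integrable_const v), integral_smul, integral_const]
  simp [measure_univ]

lemma mean_eq (hP : carpetEq P) : ∫ x, x ∂P = cpt := by
  have h := step_integral P hP (fun x => x) continuous_id Set.univ MeasurableSet.univ
  simp only [Measure.restrict_univ, Set.preimage_univ] at h
  have hS : ∀ j : Fin 4, ∫ x, S j x ∂P = (3:ℝ)⁻¹ • (∫ x, x ∂P) + tv j := by
    intro j
    simp_rw [S_apply]
    exact integral_affine P hP _ _
  rw [Fin.sum_univ_four, hS 0, hS 1, hS 2, hS 3] at h
  set m := ∫ x, x ∂P with hm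
  have h0 := congrArg (fun z : E2 => z 0) h
  have h1 := congrArg (fun z : E2 => z 1) h
  simp only [PiLp.add_apply, PiLp.smul_apply, smul_eq_mul, preal, tv, pt,
    Matrix.cons_val_zero, Matrix.cons_val_one, Matrix.head_cons, Matrix.cons_val_two,
    Matrix.tail_cons, Matrix.cons_val_three, WithLp.equiv_symm_apply] at h0 h1
  have hc0 : m 0 = 1/2 := by linarith
  have hc1 : m 1 = 3/4 := by linarith
  have hcpt0 : cpt 0 = 1/2 := by simp [cpt, pt]
  have hcpt1 : cpt 1 = 3/4 := by simp [cpt, pt]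
  ext k
  fin_cases k
  · exact hc0.trans hcpt0.symm
  · exact hc1.trans hcpt1.symm

open scoped RealInnerProductSpace

lemma unitSq_meas : MeasurableSet unitSq := unitSq_closed.measurableSet

lemma restrict_unitSq (hP : carpetEq P) : P.restrict unitSq = P :=
  Measure.restrict_eq_self_of_ae_mem (ae_mem_unitSq P hP)

def Vr (P : Measure E2) : ℝ := ∫ x, ‖x - cpt‖^2 ∂P

lemma norm_sq_coords (v : E2) : ‖v‖^2 = (v 0)^2 + (v 1)^2 := by
  rw [EuclideanSpace.norm_eq, Real.sq_sqrt (by positivity), Fin.sum_univ_two, Real.norm_eq_abs, Real.norm_eq_abs, sq_abs, sq_abs]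

lemma cont_normsq (u : E2) : Continuous (fun x : E2 => ‖x - u‖^2) :=
  ((continuous_id.sub continuous_const).norm).pow 2

lemma Vr_nonneg : 0 ≤ Vr P := integral_nonneg fun x => sq_nonneg _

lemma Vr_le (hP : carpetEq P) : Vr P ≤ 13/16 := by
  have h1 : Vr P = ∫ x in unitSq, ‖x - cpt‖^2 ∂P := by
    rw [restrict_unitSq P hP, Vr]
  rw [h1]
  have hb : ∀ x ∈ unitSq, ‖x - cpt‖^2 ≤ 13/16 := by
    intro x hx
    have h0 := hx 0
    have h1 := hx 1
    simp only [Set.mem_Icc] at h0 h1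
    rw [norm_sq_coords]
    have hc0 : cpt 0 = 1/2 := by simp [cpt, pt]
    have hc1 : cpt 1 = 3/4 := by simp [cpt, pt]
    simp only [PiLp.sub_apply, hc0, hc1]
    nlinarith [h0.1, h0.2, h1.1, h1.2]
  calc ∫ x in unitSq, ‖x - cpt‖^2 ∂P ≤ ∫ _ in unitSq, (13/16 : ℝ) ∂P := by
        refine setIntegral_mono_on ((integrable_cont P hP _ (cont_normsq cpt)).restrict)
          (integrable_const _).restrict unitSq_meas hb
    _ = (P unitSq).toReal * (13/16) := by rw [setIntegral_const]; simp [smul_eq_mul, Measure.real]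
    _ ≤ 13/16 := by
        have : (P unitSq).toReal ≤ 1 := by
          have := prob_le_one (μ := P) (s := unitSq)
          exact ENNReal.toReal_le_of_le_ofReal (by norm_num) (by simpa using this)
        nlinarith [this]

lemma expand (hP : carpetEq P) (u : E2) :
    ∫ x, ‖x - u‖^2 ∂P = Vr P + ‖cpt - u‖^2 := by
  have hpt : ∀ x : E2, ‖x - u‖^2
      = ‖x - cpt‖^2 + (2 * ⟪cpt - u, x - cpt⟫) + ‖cpt - u‖^2 := by
    intro x
    have h : x - u = (x - cpt) + (cpt - u) := by abel
    rw [h, norm_add_sq_real, real_inner_comm]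
  rw [integral_congr_ae (Filter.Eventually.of_forall hpt)]
  have hint1 : Integrable (fun x : E2 => ‖x - cpt‖^2) P :=
    integrable_cont P hP _ (cont_normsq cpt)
  have hcont2 : Continuous (fun x : E2 => 2 * ⟪cpt - u, x - cpt⟫) :=
    continuous_const.mul (continuous_const.inner (continuous_id.sub continuous_const))
  have hint2 : Integrable (fun x : E2 => 2 * ⟪cpt - u, x - cpt⟫) P :=
    integrable_cont P hP _ hcont2
  have hint12 : Integrable (fun x : E2 => ‖x - cpt‖^2 + 2 * ⟪cpt - u, x - cpt⟫) P :=
    hint1.add hint2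
  rw [integral_add hint12 (integrable_const _), integral_add hint1 hint2, integral_const]
  have hsub : Integrable (fun x : E2 => x - cpt) P :=
    (integrable_cont P hP _ continuous_id).sub (integrable_const _)
  have hz : ∫ x, (2 : ℝ) * ⟪cpt - u, x - cpt⟫ ∂P = 0 := by
    rw [integral_const_mul, integral_inner hsub]
    have : ∫ x, (x - cpt) ∂P = 0 := by
      rw [integral_sub (integrable_cont P hP (fun x : E2 => x) continuous_id)
        (integrable_const _), mean_eq P hP, integral_const]
      simp [measure_univ]
    rw [this, inner_zero_right, mul_zero]
  rw [hz]
  simp [measure_univ, Vr]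

lemma mom_affine (hP : carpetEq P) (r : ℝ) (hr : r ≠ 0) (v u : E2) :
    ∫ x, ‖(r • x + v) - u‖^2 ∂P = r^2 * Vr P + ‖(r • cpt + v) - u‖^2 := by
  have key : ∀ x : E2, ‖(r • x + v) - u‖^2 = r^2 * ‖x - (r⁻¹ • (u - v))‖^2 := by
    intro x
    have h1 : r • (x - r⁻¹ • (u - v)) = (r • x + v) - u := by
      rw [smul_sub, smul_inv_smul₀ hr]
      abel
    rw [← h1, norm_smul, Real.norm_eq_abs, mul_pow, sq_abs]
  rw [integral_congr_ae (Filter.Eventually.of_forall key)]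
  rw [integral_const_mul, expand P hP (r⁻¹ • (u - v)), key cpt]
  ring



lemma Sw_pow_ne (w : List (Fin 4)) : (((3:ℝ) ^ w.length)⁻¹) ≠ 0 := by positivity

lemma Sw_sub (w : List (Fin 4)) (x y : E2) :
    Sw w x - Sw w y = (((3:ℝ) ^ w.length)⁻¹) • (x - y) := by
  rw [Sw_affine w x, Sw_affine w y, smul_sub]
  abel

lemma Sw_inj (w : List (Fin 4)) : Function.Injective (Sw w) := by
  intro x y hxy
  have h := Sw_sub w x y
  rw [hxy, sub_self] at h
  have := (smul_eq_zero.1 h.symm).resolve_left (Sw_pow_ne w)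
  exact sub_eq_zero.1 this

lemma nine_pow (n : ℕ) : (((3:ℝ) ^ n)⁻¹)^2 = ((9:ℝ) ^ n)⁻¹ := by
  rw [← inv_pow, ← pow_right_comm]
  norm_num [← inv_pow]

lemma Err_eq (hP : carpetEq P) (w : List (Fin 4)) :
    Err P w = rho w * ((9:ℝ) ^ w.length)⁻¹ * Vr P := by
  rw [Err, Jw]
  rw [word_integral P hP w unitSq_meas (le_refl _) _ (cont_normsq _)]
  have key : ∀ x : E2, ‖Sw w x - Sw w (pt (1/2) (3/4))‖^2
      = ((9:ℝ) ^ w.length)⁻¹ * ‖x - cpt‖^2 := by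
    intro x
    rw [show pt (1/2) (3/4) = cpt from rfl, Sw_sub, norm_smul, Real.norm_eq_abs, mul_pow,
      sq_abs, nine_pow]
  rw [setIntegral_congr_fun unitSq_meas (fun x _ => key x)]
  rw [restrict_unitSq P hP, integral_const_mul]
  rw [Vr, smul_eq_mul]
  ring

lemma P_unitSq (hP : carpetEq P) : P unitSq = 1 := by
  have h := measure_add_measure_compl (μ := P) unitSq_meas
  rw [compl_null P hP, add_zero, measure_univ] at h
  exact h

lemma mass_eq (hP : carpetEq P) (w : List (Fin 4)) {B : Set E2} (hB : MeasurableSet B)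
    (hBU : B ⊆ unitSq) : (P (Sw w '' B)).toReal = rho w * (P B).toReal := by
  have h := word_integral P hP w hB hBU (fun _ => (1:ℝ)) continuous_const
  rw [setIntegral_const, setIntegral_const] at h
  simpa [smul_eq_mul, Measure.real] using h

lemma Jset_meas (k : Fin 4) : MeasurableSet (Jset k) := image_S_meas k unitSq_meas

lemma Jset_sub (k : Fin 4) : Jset k ⊆ unitSq := (S_mapsTo k).image_subset

lemma Jw_append (w : List (Fin 4)) (k : Fin 4) : Jw (w ++ [k]) = Sw w '' Jset k := by
  rw [Jw, Jset]
  have : Sw (w ++ [k]) = Sw w ∘ S k := by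
    funext x
    rw [Sw_append]
    rfl
  rw [this, Set.image_comp]

lemma mass_child (hP : carpetEq P) (w : List (Fin 4)) (k : Fin 4) :
    (P (Jw (w ++ [k]))).toReal = rho w * preal k := by
  rw [Jw_append, mass_eq P hP w (Jset_meas k) (Jset_sub k)]
  have h2 : (P (Jset k)).toReal = preal k := by
    rw [Jset, show S k '' unitSq = Sw [k] '' unitSq from rfl,
      mass_eq P hP ([k]) unitSq_meas (le_refl _), P_unitSq P hP]
    simp [rho]
  rw [h2]

lemma child_integral (hP : carpetEq P) (w : List (Fin 4)) (k : Fin 4) (f : E2 → F)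
    (hf : Continuous f) :
    ∫ x in Jw (w ++ [k]), f x ∂P = (rho w * preal k) • ∫ x, f (Sw (w ++ [k]) x) ∂P := by
  rw [Jw_append, word_integral P hP w (Jset_meas k) (Jset_sub k) f hf, Jset,
    image_integral P hP k unitSq_meas (le_refl _) (fun x => f (Sw w x)) (hf.comp (Sw_cont w)),
    restrict_unitSq P hP, smul_smul]
  congr 1
  apply integral_congr_ae
  filter_upwards with x
  rw [Sw_append]
  rfl

lemma vecint (hP : carpetEq P) (w : List (Fin 4)) (k : Fin 4) :
    ∫ x in Jw (w ++ [k]), x ∂P = (rho w * preal k) • Sw (w ++ [k]) cpt := by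
  rw [child_integral P hP w k (fun x => x) continuous_id]
  congr 1
  have haff : ∀ x : E2, Sw (w ++ [k]) x
      = (((3:ℝ) ^ (w ++ [k]).length)⁻¹) • x + Sw (w ++ [k]) 0 := Sw_affine _
  rw [integral_congr_ae (Filter.Eventually.of_forall haff), integral_affine P hP,
    mean_eq P hP, ← haff cpt]

lemma sqint (hP : carpetEq P) (w : List (Fin 4)) (k : Fin 4) (u : E2) :
    ∫ x in Jw (w ++ [k]), ‖x - u‖^2 ∂P
      = (rho w * preal k) * (((9:ℝ) ^ (w ++ [k]).length)⁻¹ * Vr P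
        + ‖Sw (w ++ [k]) cpt - u‖^2) := by
  rw [child_integral P hP w k _ (cont_normsq u)]
  have haff : ∀ x : E2, ‖Sw (w ++ [k]) x - u‖^2
      = ‖((((3:ℝ) ^ (w ++ [k]).length)⁻¹) • x + Sw (w ++ [k]) 0) - u‖^2 := by
    intro x
    rw [← Sw_affine]
  rw [integral_congr_ae (Filter.Eventually.of_forall haff),
    mom_affine P hP _ (Sw_pow_ne (w ++ [k])) _ u, nine_pow, ← Sw_affine, smul_eq_mul]


lemma length_app (w : List (Fin 4)) (k : Fin 4) : (w ++ [k]).length = w.length + 1 := by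
  simp

lemma Jw_meas (w : List (Fin 4)) : MeasurableSet (Jw w) := Sw_image_meas w unitSq_meas

lemma Jw_child_disj (w : List (Fin 4)) {i j : Fin 4} (hij : i ≠ j) :
    Disjoint (Jw (w ++ [i])) (Jw (w ++ [j])) := by
  rw [Jw_append, Jw_append]
  exact Set.disjoint_image_of_injective (Sw_inj w)
    (Set.disjoint_iff_inter_eq_empty.2 (Jset_disj hij))

lemma a_sub (w : List (Fin 4)) (i j : Fin 4) :
    Sw (w ++ [i]) cpt - Sw (w ++ [j]) cpt = (((3:ℝ) ^ w.length)⁻¹) • (tv i - tv j) := by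
  have hi : Sw (w ++ [i]) cpt = Sw w (S i cpt) := by rw [Sw_append]; rfl
  have hj : Sw (w ++ [j]) cpt = Sw w (S j cpt) := by rw [Sw_append]; rfl
  rw [hi, hj, Sw_sub]
  congr 1
  rw [S_apply, S_apply]
  abel

lemma Epair_formula (hP : carpetEq P) (w : List (Fin 4)) {i j : Fin 4} (hij : i ≠ j) :
    Epair P w i j = rho w * ((preal i + preal j) * ((9:ℝ) ^ (w.length + 1))⁻¹ * Vr P
      + (preal i * preal j / (preal i + preal j)) * ((9:ℝ) ^ w.length)⁻¹
        * ‖tv i - tv j‖^2) := by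
  have hdisj := Jw_child_disj w hij
  have hmj := Jw_meas (w ++ [j])
  set ai := Sw (w ++ [i]) cpt with hai
  set aj := Sw (w ++ [j]) cpt with haj
  set s := preal i + preal j with hsdef
  have hspos : 0 < s := add_pos (preal_pos i) (preal_pos j)
  have hs : s ≠ 0 := ne_of_gt hspos
  have hrho : rho w ≠ 0 := (rho_pos w).ne'
  have hmass : (P (Jw (w ++ [i]) ∪ Jw (w ++ [j]))).toReal = rho w * s := by
    rw [measure_union hdisj hmj, ENNReal.toReal_add (measure_ne_top P _) (measure_ne_top P _),
      mass_child P hP w i, mass_child P hP w j, hsdef]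
    ring
  have hvec : ∫ x in (Jw (w ++ [i]) ∪ Jw (w ++ [j])), x ∂P
      = (rho w * preal i) • ai + (rho w * preal j) • aj := by
    rw [setIntegral_union hdisj hmj
        ((integrable_cont P hP (fun x : E2 => x) continuous_id).integrableOn)
        ((integrable_cont P hP (fun x : E2 => x) continuous_id).integrableOn),
      vecint P hP w i, vecint P hP w j]
  have hc1 : (rho w * s)⁻¹ * (rho w * preal i) = s⁻¹ * preal i := by
    field_simp
  have hc2 : (rho w * s)⁻¹ * (rho w * preal j) = s⁻¹ * preal j := by
    field_simp
  have hb : ctr P (Jw (w ++ [i]) ∪ Jw (w ++ [j]))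
      = s⁻¹ • (preal i • ai + preal j • aj) := by
    rw [ctr, hmass, hvec, smul_add, smul_smul, smul_smul, hc1, hc2, smul_add, smul_smul,
      smul_smul]
  have hdi : ai - s⁻¹ • (preal i • ai + preal j • aj) = (s⁻¹ * preal j) • (ai - aj) := by
    have h1 : s • (ai - s⁻¹ • (preal i • ai + preal j • aj)) = preal j • (ai - aj) := by
      rw [smul_sub, smul_inv_smul₀ hs]
      rw [hsdef]
      module
    calc ai - s⁻¹ • (preal i • ai + preal j • aj)
        = s⁻¹ • (s • (ai - s⁻¹ • (preal i • ai + preal j • aj))) := (inv_smul_smul₀ hs _).symm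
      _ = s⁻¹ • (preal j • (ai - aj)) := by rw [h1]
      _ = (s⁻¹ * preal j) • (ai - aj) := by rw [smul_smul]
  have hdj : aj - s⁻¹ • (preal i • ai + preal j • aj) = (s⁻¹ * preal i) • (aj - ai) := by
    have h1 : s • (aj - s⁻¹ • (preal i • ai + preal j • aj)) = preal i • (aj - ai) := by
      rw [smul_sub, smul_inv_smul₀ hs]
      rw [hsdef]
      module
    calc aj - s⁻¹ • (preal i • ai + preal j • aj)
        = s⁻¹ • (s • (aj - s⁻¹ • (preal i • ai + preal j • aj))) := (inv_smul_smul₀ hs _).symm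
      _ = s⁻¹ • (preal i • (aj - ai)) := by rw [h1]
      _ = (s⁻¹ * preal i) • (aj - ai) := by rw [smul_smul]
  have hD : ‖ai - aj‖^2 = ((9:ℝ) ^ w.length)⁻¹ * ‖tv i - tv j‖^2 := by
    rw [hai, haj, a_sub, norm_smul, Real.norm_eq_abs, mul_pow, sq_abs, nine_pow]
  unfold Epair
  rw [hb]
  rw [setIntegral_union hdisj hmj
      ((integrable_cont P hP _ (cont_normsq _)).integrableOn)
      ((integrable_cont P hP _ (cont_normsq _)).integrableOn),
    sqint P hP w i, sqint P hP w j]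
  rw [← hai, ← haj, hdi, hdj]
  rw [norm_smul, norm_smul, Real.norm_eq_abs, Real.norm_eq_abs, mul_pow, mul_pow, sq_abs,
    sq_abs, norm_sub_rev aj ai, hD, length_app, length_app]
  rw [hsdef]
  have h9 : ((9:ℝ) ^ (w.length + 1))⁻¹ = ((9:ℝ) ^ w.length)⁻¹ / 9 := by
    rw [pow_succ]
    field_simp
  rw [h9]
  have hs2 : preal i + preal j ≠ 0 := hs
  field_simp
  ring

lemma htv02 : ‖tv 0 - tv 2‖^2 = (4/9 : ℝ) := by
  rw [norm_sq_coords]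
  simp [tv, pt]
  norm_num

lemma htv13 : ‖tv 1 - tv 3‖^2 = (4/9 : ℝ) := by
  rw [norm_sq_coords]
  simp [tv, pt]
  norm_num

lemma htv01 : ‖tv 0 - tv 1‖^2 = (4/9 : ℝ) := by
  rw [norm_sq_coords]
  simp [tv, pt]
  norm_num

lemma hp0 : preal 0 = 1/8 := by norm_num [preal]
lemma hp1 : preal 1 = 1/8 := by norm_num [preal]
lemma hp2 : preal 2 = 3/8 := by norm_num [preal] <;> rfl
lemma hp3 : preal 3 = 3/8 := by norm_num [preal] <;> rfl


theorem Err_children (P : Measure E2) [IsProbabilityMeasure P] (hP : carpetEq P)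
    (w : List (Fin 4)) :
    Err P (w ++ [0]) = (1/72) * Err P w
    ∧ Err P (w ++ [1]) = (1/72) * Err P w
    ∧ Err P (w ++ [2]) = (1/24) * Err P w
    ∧ Err P (w ++ [3]) = (1/24) * Err P w
    ∧ (0 < Err P w →
        Epair P w 0 2 = Epair P w 1 3
        ∧ Epair P w 1 3 > Epair P w 0 1
        ∧ Epair P w 0 1 > Err P (w ++ [2])
        ∧ Err P (w ++ [2]) = Err P (w ++ [3])
        ∧ Err P (w ++ [3]) > Err P (w ++ [0])
        ∧ Err P (w ++ [0]) = Err P (w ++ [1])) := by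
  have hV0 : 0 ≤ Vr P := Vr_nonneg P
  have hV2 : Vr P < 2 := lt_of_le_of_lt (Vr_le P hP) (by norm_num)
  have hqpos : 0 < rho w * ((9:ℝ) ^ w.length)⁻¹ := by
    have := rho_pos w
    positivity
  have h9 : ((9:ℝ) ^ (w.length + 1))⁻¹ = ((9:ℝ) ^ w.length)⁻¹ / 9 := by
    rw [pow_succ]
    field_simp
  have hE : Err P w = rho w * ((9:ℝ) ^ w.length)⁻¹ * Vr P := Err_eq P hP w
  have hch : ∀ k : Fin 4, Err P (w ++ [k]) = (preal k / 9) * Err P w := by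
    intro k
    rw [Err_eq P hP, Err_eq P hP, rho_append, length_app, h9]
    ring
  have h02 : Epair P w 0 2
      = rho w * ((9:ℝ) ^ w.length)⁻¹ * (Vr P / 18 + 1/24) := by
    rw [Epair_formula P hP w (show (0 : Fin 4) ≠ 2 by decide), h9, htv02, hp0, hp2]
    ring
  have h13 : Epair P w 1 3
      = rho w * ((9:ℝ) ^ w.length)⁻¹ * (Vr P / 18 + 1/24) := by
    rw [Epair_formula P hP w (show (1 : Fin 4) ≠ 3 by decide), h9, htv13, hp1, hp3]
    ring
  have h01 : Epair P w 0 1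
      = rho w * ((9:ℝ) ^ w.length)⁻¹ * (Vr P / 36 + 1/36) := by
    rw [Epair_formula P hP w (show (0 : Fin 4) ≠ 1 by decide), h9, htv01, hp0, hp1]
    ring
  refine ⟨by rw [hch 0, hp0]; ring, by rw [hch 1, hp1]; ring,
    by rw [hch 2, hp2]; ring, by rw [hch 3, hp3]; ring, fun hpos => ?_⟩
  refine ⟨h02.trans h13.symm, ?_, ?_, by rw [hch 2, hch 3, hp2, hp3], ?_,
    by rw [hch 0, hch 1, hp0, hp1]⟩
  · rw [h13, h01]
    nlinarith [hqpos, hV0]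
  · rw [h01, hch 2, hp2, hE]
    nlinarith [hqpos, hV2, hV0]
  · rw [hch 3, hch 0, hp3, hp0]
    nlinarith [hpos]
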